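/- Let N be a semibinary 1-nested network on leaf set S (hybrid nodes have in-degree 2 and out-degree 1) and let i, j be two distinct leaves. Then i and j are siblings if and only if ℓ_N(i,j) = ℓ_N(j,i) = 1, where ℓ_N(i,j) is the length of a shortest path from the unique lowest common ancestor of i and j to i. -/

import Mathlib

/-- A walk in a directed graph `E` given by its (nonempty) list of vertices,
from `u` to `v`. -/
def IsWalk {V : Type*} (E : V → V → Prop) (l : List V) (u v : V) : Prop :=
  l.Chain' E ∧ l.head? = some u ∧ l.getLast? = some v

/-- In-degree of a node. -/
noncomputable def inDeg {V : Type*} [Fintype V] (E : V → V → Prop) (v : V) : ℕ :=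
  Nat.card {u // E u v}

/-- Out-degree of a node. -/
noncomputable def outDeg {V : Type*} [Fintype V] (E : V → V → Prop) (v : V) : ℕ :=
  Nat.card {w // E v w}

/-- The cluster of a node: the set of leaves (out-degree 0 nodes) that are
descendants of it. -/
noncomputable def cluster {V : Type*} [Fintype V] (E : V → V → Prop) (v : V) : Set V :=
  {l | outDeg E l = 0 ∧ Relation.ReflTransGen E v l}

/-- The intermediate (internal) nodes of a walk. -/
def internals {V : Type*} (l : List V) : List V := l.tail.dropLast

/-- The arcs of a walk. -/
def arcsOf {V : Type*} (l : List V) : List (V × V) := l.zip l.tail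

/-- A reticulation cycle with split node `x` and hybrid end `h`, consisting of the
two internally disjoint merge paths `p` and `q`. -/
def RetCycleAt {V : Type*} (E : V → V → Prop) (x h : V) (p q : List V) : Prop :=
  IsWalk E p x h ∧ IsWalk E q x h ∧ p ≠ q ∧ ∀ y ∈ internals p, y ∉ internals q

/-- A network is 1-nested when every pair of distinct reticulation cycles (for hybrid
nodes) have disjoint sets of arcs. -/
noncomputable def OneNested {V : Type*} [Fintype V] (E : V → V → Prop) : Prop :=
  ∀ x h p q x' h' p' q', 2 ≤ inDeg E h → 2 ≤ inDeg E h' →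
    RetCycleAt E x h p q → RetCycleAt E x' h' p' q' →
    ¬ (x = x' ∧ h = h' ∧ ({p, q} : Set (List V)) = {p', q'}) →
    ∀ a ∈ arcsOf p ++ arcsOf q, a ∉ arcsOf p' ++ arcsOf q'

/-- `x` is a common ancestor of `u` and `v`. -/
def CommonAnc {V : Type*} (E : V → V → Prop) (x u v : V) : Prop :=
  Relation.ReflTransGen E x u ∧ Relation.ReflTransGen E x v

/-- `x` is a lowest common ancestor of `u` and `v`: a common ancestor that is not a
proper ancestor of any other common ancestor. -/
def IsLCA {V : Type*} (E : V → V → Prop) (x u v : V) : Prop :=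
  CommonAnc E x u v ∧ ∀ y, CommonAnc E y u v → y ≠ x → ¬ Relation.TransGen E x y

/-- There is a directed path of length `k` from `x` to `y`. -/
def HasPathLen {V : Type*} (E : V → V → Prop) (x y : V) (k : ℕ) : Prop :=
  ∃ l : List V, IsWalk E l x y ∧ l.length = k + 1

/-- The length of a shortest directed path from `x` to `y` is `k`. -/
def ShortestLen {V : Type*} (E : V → V → Prop) (x y : V) (k : ℕ) : Prop :=
  HasPathLen E x y k ∧ ∀ m, HasPathLen E x y m → k ≤ m

/-- In a semibinary 1-nested network, two distinct leaves `i` and `j` are siblings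
if and only if the shortest paths from their (unique) lowest common ancestor to each
of them both have length 1, i.e. ℓ(i,j) = ℓ(j,i) = 1. -/
theorem stmt16 {V : Type*} [Fintype V] (E : V → V → Prop) (r : V)
    (hacyc : ∀ v, ¬ Relation.TransGen E v v)
    (hroot : ∀ v, Relation.ReflTransGen E r v)
    (hin2 : ∀ v, inDeg E v ≤ 2)
    (hhybout : ∀ v, inDeg E v = 2 → outDeg E v = 1)
    (htreeout : ∀ v, inDeg E v ≤ 1 → (∃ w, E v w) → 2 ≤ outDeg E v)
    (hnested : OneNested E)
    (i j : V) (hij : i ≠ j)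
    (hi : outDeg E i = 0) (hj : outDeg E j = 0)
    (x : V) (hx : IsLCA E x i j) :
    (∃ p, E p i ∧ E p j) ↔ (ShortestLen E x i 1 ∧ ShortestLen E x j 1) := by
  have leafNoOut : ∀ v, outDeg E v = 0 → ∀ w, ¬ E v w := by
    intro v hv w hw
    have : IsEmpty {w // E v w} := by
      rcases (Nat.card_eq_zero).1 hv with h | h
      · exact h
      · exact absurd h (not_infinite_iff_finite.2 (Finite.of_fintype _ |>.of_injective _ Subtype.val_injective)) 
    exact this.elim ⟨w, hw⟩
  have leafFix : ∀ v, outDeg E v = 0 → ∀ z, Relation.ReflTransGen E v z → z = v := by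
    intro v hv z hz
    rcases Relation.ReflTransGen.cases_head hz with h | ⟨c, hc, _⟩
    · exact h.symm
    · exact absurd hc (leafNoOut v hv c)
  -- leaves have in-degree ≤ 1, hence unique parent
  have parentUniq : ∀ v, outDeg E v = 0 → ∀ p q, E p v → E q v → p = q := by
    intro v hv p q hp hq
    by_contra hpq
    have h2 : 2 ≤ inDeg E v := by
      have : Nontrivial {u // E u v} := ⟨⟨⟨p, hp⟩, ⟨q, hq⟩, by simpa using hpq⟩⟩
      have h := Finite.one_lt_card_iff_nontrivial.2 this
      exact h
    have := hhybout v (le_antisymm (hin2 v) h2)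
    omega
  have hxi : Relation.ReflTransGen E x i := hx.1.1
  have hxj : Relation.ReflTransGen E x j := hx.1.2
  have hxne_i : x ≠ i := fun h => hij ((leafFix i hi j (h ▸ hxj)).symm ▸ rfl)
  have hxne_j : x ≠ j := fun h => hij.symm ((leafFix j hj i (h ▸ hxi)).symm ▸ rfl)
  constructor
  · rintro ⟨p, hpi, hpj⟩
    -- x is an ancestor of p
    have hxp : Relation.ReflTransGen E x p := by
      rcases Relation.ReflTransGen.cases_tail hxi with h | ⟨c, hc, hci⟩
      · exact absurd h.symm hxne_i
      · rwa [parentUniq i hi c p hci hpi] at hc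
    have hxp' : x = p := by
      by_contra hne
      have : Relation.TransGen E x p := by
        rcases (Relation.reflTransGen_iff_eq_or_transGen.1 hxp) with h | h
        · exact absurd h.symm hne
        · exact h
      exact hx.2 p ⟨Relation.ReflTransGen.single hpi, Relation.ReflTransGen.single hpj⟩
        (fun h => hne h.symm) this
    subst hxp'
    have mk1 : ∀ y : V, E x y → x ≠ y → ShortestLen E x y 1 := by
      intro y hxy hne
      refine ⟨⟨[x, y], ⟨?_, rfl, rfl⟩, rfl⟩, ?_⟩
      · exact List.isChain_pair.2 hxy
      · intro m ⟨l, ⟨_, hh, hl⟩, hlen⟩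
        rcases m with _ | m
        · match l, hlen with
          | [a], _ =>
            simp at hh hl
            subst hh
            exact absurd hl hne
        · omega
    exact ⟨mk1 i hpi hxne_i, mk1 j hpj hxne_j⟩
  · rintro ⟨⟨⟨l, ⟨hch, hh, hl⟩, hlen⟩, _⟩, ⟨⟨l', ⟨hch', hh', hl'⟩, hlen'⟩, _⟩⟩
    refine ⟨x, ?_, ?_⟩
    · match l, hlen with
      | [a, b], _ =>
        simp at hh hl
        subst hh hl
        exact List.isChain_pair.1 hch
    · match l', hlen' with
      | [a, b], _ =>
        simp at hh' hl'
        subst hh' hl'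
        exact List.isChain_pair.1 hch'
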